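/- For i = 1, …, n let D_i ∈ ℝ^{d×m}, let D̄_i = D_i − (1/m) D_i 𝟏 𝟏ᵀ be the zero-centered shapes, and let D̃_i = [D_i; 𝟏ᵀ] be the homogeneous representations. Assume each D̄_i D̄_iᵀ and each D̃_i D̃_iᵀ is invertible. Define Q = ∑_{i=1}^{n} D̃_iᵀ (D̃_i D̃_iᵀ)⁻¹ D̃_i and Q∘ = ∑_{i=1}^{n} D̄_iᵀ (D̄_i D̄_iᵀ)⁻¹ D̄_i. Then Q = (n/m) 𝟏 𝟏ᵀ + Q∘, and moreover Q∘ 𝟏 = 0 and Q 𝟏 = n 𝟏. -/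

import Mathlib

open Matrix

/-- Homogeneous representation `D̃ = [D; 𝟏ᵀ]` of a shape `D ∈ ℝ^{d×m}`. -/
def homog {d m : ℕ} (D : Matrix (Fin d) (Fin m) ℝ) :
    Matrix (Fin d ⊕ Fin 1) (Fin m) ℝ :=
  Matrix.fromRows D (Matrix.of fun _ _ => (1 : ℝ))

section Aux

variable {d m : ℕ}

private lemma sum_mulVec' {n k : ℕ} (A : Fin n → Matrix (Fin k) (Fin k) ℝ)
    (v : Fin k → ℝ) : (∑ i, A i) *ᵥ v = ∑ i, A i *ᵥ v := by
  funext x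
  simp only [Matrix.mulVec, dotProduct, Finset.sum_apply,
    Matrix.sum_apply, Finset.sum_mul]
  rw [Finset.sum_comm]

private lemma JJ_lemma :
    (vecMulVec (fun _ => (1 : ℝ)) (fun _ => (1 : ℝ)) : Matrix (Fin m) (Fin m) ℝ) *
      vecMulVec (fun _ => (1 : ℝ)) (fun _ => (1 : ℝ)) =
      (m : ℝ) • vecMulVec (fun _ => (1 : ℝ)) (fun _ => (1 : ℝ)) := by
  ext i j
  simp [Matrix.mul_apply, Matrix.vecMulVec_apply, Finset.sum_const,
    Finset.card_univ]

private lemma BJ_lemma (hm : m ≠ 0) (D B : Matrix (Fin d) (Fin m) ℝ)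
    (hB : B = D -
      (1 / (m : ℝ)) • (D * vecMulVec (fun _ => (1 : ℝ)) (fun _ => (1 : ℝ)))) :
    B * vecMulVec (fun _ => (1 : ℝ)) (fun _ => (1 : ℝ)) =
      (0 : Matrix (Fin d) (Fin m) ℝ) := by
  rw [hB]
  change (D - (1 / (m : ℝ)) • (D * (vecMulVec (fun _ => (1 : ℝ)) (fun _ => (1 : ℝ)) :
    Matrix (Fin m) (Fin m) ℝ))) * (vecMulVec (fun _ => (1 : ℝ)) (fun _ => (1 : ℝ)) :
    Matrix (Fin m) (Fin m) ℝ) = 0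
  rw [Matrix.sub_mul, Matrix.smul_mul, Matrix.mul_assoc, JJ_lemma,
    Matrix.mul_smul, smul_smul]
  rw [show ((1 : ℝ) / m) * (m : ℝ) = 1 by field_simp, one_smul, sub_self]

private lemma key_lemma (hm : m ≠ 0) (D B : Matrix (Fin d) (Fin m) ℝ)
    (hB : B = D -
      (1 / (m : ℝ)) • (D * vecMulVec (fun _ => (1 : ℝ)) (fun _ => (1 : ℝ))))
    (hBinv : IsUnit (B * Bᵀ)) (hAinv : IsUnit (homog D * (homog D)ᵀ)) :
    (homog D)ᵀ * (homog D * (homog D)ᵀ)⁻¹ * homog D =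
      ((1 : ℝ) / (m : ℝ)) • vecMulVec (fun _ => (1 : ℝ)) (fun _ => (1 : ℝ)) +
        Bᵀ * (B * Bᵀ)⁻¹ * B := by
  set A := homog D with hA
  set S := (A * Aᵀ)⁻¹ with hS
  set T := (B * Bᵀ)⁻¹ with hT
  set J : Matrix (Fin m) (Fin m) ℝ :=
    vecMulVec (fun _ => (1 : ℝ)) (fun _ => (1 : ℝ)) with hJ
  set c : ℝ := 1 / (m : ℝ) with hc
  set P := Aᵀ * S * A with hP
  set M := c • J + Bᵀ * T * B with hM
  have hcm : c * (m : ℝ) = 1 := by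
    rw [hc]; field_simp
  -- basic inverse facts
  have hA1 : A * Aᵀ * S = 1 :=
    Matrix.mul_nonsing_inv _ ((Matrix.isUnit_iff_isUnit_det _).mp hAinv)
  have hA2 : S * (A * Aᵀ) = 1 :=
    Matrix.nonsing_inv_mul _ ((Matrix.isUnit_iff_isUnit_det _).mp hAinv)
  have hT1 : B * Bᵀ * T = 1 :=
    Matrix.mul_nonsing_inv _ ((Matrix.isUnit_iff_isUnit_det _).mp hBinv)
  have hT2 : T * (B * Bᵀ) = 1 :=
    Matrix.nonsing_inv_mul _ ((Matrix.isUnit_iff_isUnit_det _).mp hBinv)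
  have hSt : Sᵀ = S := by
    rw [hS, Matrix.transpose_nonsing_inv, Matrix.transpose_mul,
      Matrix.transpose_transpose]
  have hTt : Tᵀ = T := by
    rw [hT, Matrix.transpose_nonsing_inv, Matrix.transpose_mul,
      Matrix.transpose_transpose]
  have hJsym : Jᵀ = J := by
    ext i j; simp [hJ, Matrix.vecMulVec_apply]
  have hJJ : J * J = (m : ℝ) • J := by
    ext i j
    simp [hJ, Matrix.mul_apply, Matrix.vecMulVec_apply, Finset.sum_const,
      Finset.card_univ]
  -- B annihilates ones
  have hBJ : B * J = 0 := BJ_lemma hm D B (by rw [hB, hJ, hc])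
  have hJB : J * Bᵀ = 0 := by
    have := congrArg Matrix.transpose hBJ
    simpa [Matrix.transpose_mul, hJsym] using this
  -- P is symmetric
  have hPsym : Pᵀ = P := by
    rw [hP, Matrix.transpose_mul, Matrix.transpose_mul, Matrix.transpose_transpose,
      hSt, Matrix.mul_assoc]
  -- A * P = A
  have hAP : A * P = A := by
    rw [hP, ← Matrix.mul_assoc, ← Matrix.mul_assoc, hA1, Matrix.one_mul]
  -- componentwise consequences of A * P = A
  have hsum1 : ∀ j, (∑ k, P k j) = 1 := by
    intro j
    have h := congrFun (congrFun hAP (Sum.inr 0)) j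
    simpa [hA, homog, Matrix.mul_apply, Matrix.fromRows_apply_inl, Matrix.fromRows_apply_inr] using h
  have hDP : D * P = D := by
    ext r j
    have h := congrFun (congrFun hAP (Sum.inl r)) j
    simpa [hA, homog, Matrix.mul_apply, Matrix.fromRows_apply_inl, Matrix.fromRows_apply_inr] using h
  have hJP : J * P = J := by
    ext i j
    simp [hJ, Matrix.mul_apply, Matrix.vecMulVec_apply, hsum1 j]
  have hPJ : P * J = J := by
    have := congrArg Matrix.transpose hJP
    simpa [Matrix.transpose_mul, hPsym, hJsym] using this
  have hBP : B * P = B := by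
    rw [hB, Matrix.sub_mul, Matrix.smul_mul, hDP]
    congr 2
    exact (Matrix.mul_assoc D J P).trans (congrArg (D * ·) hJP)
  have hPB : P * Bᵀ = Bᵀ := by
    have := congrArg Matrix.transpose hBP
    simpa [Matrix.transpose_mul, hPsym] using this
  -- P * M = M
  have hPM : P * M = M := by
    rw [hM, Matrix.mul_add, Matrix.mul_smul, hPJ]
    rw [show P * (Bᵀ * T * B) = P * Bᵀ * T * B by
      simp [Matrix.mul_assoc], hPB]
  -- J * M = J
  have hJM : J * M = J := by
    rw [hM, Matrix.mul_add, Matrix.mul_smul, hJJ, smul_smul, hcm, one_smul]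
    rw [show J * (Bᵀ * T * B) = J * Bᵀ * T * B by simp [Matrix.mul_assoc], hJB]
    simp
  -- B * M = B
  have hBM : B * M = B := by
    rw [hM, Matrix.mul_add, Matrix.mul_smul, hBJ, smul_zero]
    rw [show B * (Bᵀ * T * B) = B * Bᵀ * T * B by simp [Matrix.mul_assoc], hT1]
    simp
  -- D * M = D
  have hDM : D * M = D := by
    have hD : D = B + c • (D * J) := by
      rw [hB]; exact (sub_add_cancel _ _).symm
    conv_lhs => rw [hD]
    rw [Matrix.add_mul, hBM, Matrix.smul_mul, Matrix.mul_assoc, hJM, ← hD]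
  -- A * M = A
  have hAM : A * M = A := by
    ext i j
    cases i with
    | inl r =>
      have h := congrFun (congrFun hDM r) j
      simpa [hA, homog, Matrix.mul_apply, Matrix.fromRows_apply_inl, Matrix.fromRows_apply_inr] using h
    | inr o =>
      have i0 : Fin m := ⟨0, Nat.pos_of_ne_zero hm⟩
      have h := congrFun (congrFun hJM i0) j
      simp only [hJ, Matrix.mul_apply, Matrix.vecMulVec_apply, one_mul,
        mul_one] at h
      simpa [hA, homog, Matrix.mul_apply, Matrix.fromRows_apply_inl, Matrix.fromRows_apply_inr] using h
  -- M symmetric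
  have hMsym : Mᵀ = M := by
    rw [hM, Matrix.transpose_add, Matrix.transpose_smul, hJsym,
      Matrix.transpose_mul, Matrix.transpose_mul, Matrix.transpose_transpose,
      hTt, Matrix.mul_assoc]
  -- M * P = P
  have hMA : M * Aᵀ = Aᵀ := by
    have := congrArg Matrix.transpose hAM
    simpa [Matrix.transpose_mul, hMsym] using this
  have hMP : M * P = P := by
    rw [hP, ← Matrix.mul_assoc, ← Matrix.mul_assoc, hMA]
  -- conclude P = M
  calc P = (M * P)ᵀ := by rw [hMP, hPsym]
    _ = Pᵀ * Mᵀ := by rw [Matrix.transpose_mul]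
    _ = P * M := by rw [hPsym, hMsym]
    _ = M := hPM

private lemma Bones (hm : m ≠ 0) (D B : Matrix (Fin d) (Fin m) ℝ)
    (hB : B = D -
      (1 / (m : ℝ)) • (D * vecMulVec (fun _ => (1 : ℝ)) (fun _ => (1 : ℝ)))) :
    B *ᵥ (fun _ => (1 : ℝ)) = 0 := by
  have hBJ : B * (vecMulVec (fun _ => (1 : ℝ)) (fun _ => (1 : ℝ)) :
    Matrix (Fin m) (Fin m) ℝ) = 0 := BJ_lemma hm D B hB
  funext i
  have h := congrFun (congrFun hBJ i) ⟨0, Nat.pos_of_ne_zero hm⟩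
  simpa [Matrix.mul_apply, Matrix.vecMulVec_apply, Matrix.mulVec,
    dotProduct] using h

end Aux

/-- with `Q = ∑ᵢ D̃ᵢᵀ (D̃ᵢ D̃ᵢᵀ)⁻¹ D̃ᵢ` and
`Q∘ = ∑ᵢ D̄ᵢᵀ (D̄ᵢ D̄ᵢᵀ)⁻¹ D̄ᵢ` for the zero-centered shapes
`D̄ᵢ = Dᵢ − (1/m) Dᵢ 𝟏 𝟏ᵀ`, we have `Q = (n/m) 𝟏 𝟏ᵀ + Q∘`, `Q∘ 𝟏 = 0` and
`Q 𝟏 = n 𝟏`. -/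
theorem homog_projection_eq_centered (n d m : ℕ)
    (D : Fin n → Matrix (Fin d) (Fin m) ℝ)
    (Dbar : Fin n → Matrix (Fin d) (Fin m) ℝ)
    (hDbar : ∀ i, Dbar i = D i -
      (1 / (m : ℝ)) • (D i * vecMulVec (fun _ => (1 : ℝ)) (fun _ => (1 : ℝ))))
    (hbar_inv : ∀ i, IsUnit (Dbar i * (Dbar i)ᵀ))
    (htil_inv : ∀ i, IsUnit (homog (D i) * (homog (D i))ᵀ)) :
    (∑ i, (homog (D i))ᵀ * (homog (D i) * (homog (D i))ᵀ)⁻¹ * homog (D i)) =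
      ((n : ℝ) / (m : ℝ)) • vecMulVec (fun _ => (1 : ℝ)) (fun _ => (1 : ℝ)) +
        (∑ i, (Dbar i)ᵀ * (Dbar i * (Dbar i)ᵀ)⁻¹ * Dbar i) ∧
    (∑ i, (Dbar i)ᵀ * (Dbar i * (Dbar i)ᵀ)⁻¹ * Dbar i) *ᵥ (fun _ => (1 : ℝ)) = 0 ∧
    (∑ i, (homog (D i))ᵀ * (homog (D i) * (homog (D i))ᵀ)⁻¹ * homog (D i)) *ᵥ
        (fun _ => (1 : ℝ)) = (n : ℝ) • (fun _ => (1 : ℝ)) := by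
  rcases eq_or_ne m 0 with hm | hm
  · subst hm
    refine ⟨?_, ?_, ?_⟩
    · ext i j; exact i.elim0
    · funext i; exact i.elim0
    · funext i; exact i.elim0
  -- main case
  have hkey : ∀ i, (homog (D i))ᵀ * (homog (D i) * (homog (D i))ᵀ)⁻¹ * homog (D i)
      = ((1 : ℝ) / (m : ℝ)) • vecMulVec (fun _ => (1 : ℝ)) (fun _ => (1 : ℝ)) +
        (Dbar i)ᵀ * (Dbar i * (Dbar i)ᵀ)⁻¹ * Dbar i :=
    fun i => key_lemma hm (D i) (Dbar i) (hDbar i) (hbar_inv i) (htil_inv i)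
  have hmain :
      (∑ i, (homog (D i))ᵀ * (homog (D i) * (homog (D i))ᵀ)⁻¹ * homog (D i)) =
      ((n : ℝ) / (m : ℝ)) • vecMulVec (fun _ => (1 : ℝ)) (fun _ => (1 : ℝ)) +
        (∑ i, (Dbar i)ᵀ * (Dbar i * (Dbar i)ᵀ)⁻¹ * Dbar i) := by
    rw [Finset.sum_congr rfl fun i _ => hkey i, Finset.sum_add_distrib,
      Finset.sum_const, Finset.card_univ, Fintype.card_fin]
    congr 1
    rw [← Nat.cast_smul_eq_nsmul ℝ, smul_smul, mul_one_div]
  have hzero :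
      (∑ i, (Dbar i)ᵀ * (Dbar i * (Dbar i)ᵀ)⁻¹ * Dbar i) *ᵥ (fun _ => (1 : ℝ))
        = 0 := by
    rw [sum_mulVec']
    refine Finset.sum_eq_zero fun i _ => ?_
    rw [Matrix.mul_assoc, ← Matrix.mulVec_mulVec, ← Matrix.mulVec_mulVec,
      Bones hm (D i) (Dbar i) (hDbar i)]
    simp
  refine ⟨hmain, hzero, ?_⟩
  rw [hmain, Matrix.add_mulVec, hzero, add_zero]
  have hJv : (vecMulVec (fun _ => (1 : ℝ)) (fun _ => (1 : ℝ)) : Matrix (Fin m) (Fin m) ℝ)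
      *ᵥ (fun _ => (1 : ℝ)) = (m : ℝ) • (fun _ => (1 : ℝ)) := by
    funext i
    simp [Matrix.mulVec, dotProduct, Matrix.vecMulVec_apply,
      Finset.sum_const, Finset.card_univ]
  rw [Matrix.smul_mulVec, hJv, smul_smul]
  rw [div_mul_cancel₀]
  exact_mod_cast hm
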